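/- arXiv:2108.00618 — 7 statements merged into one kernel-verified Lean document; each statement's English description precedes it below -/
import Mathlib

section
/- Among all simplicial complexes K ⊊ 2^[n] with ∅ ∈ K, when n = 2m+1 is odd, the number of pairs (A, ν) with A ∈ K, ν ∉ A, A ∪ {ν} ∉ K is uniquely maximized by K = { S ⊆ [n] : |S| ≤ m }. -/
open Finset

/-- The number of facets of `Bier(K)`, counted as pairs `(A, ν)` with
`A ∈ K`, `ν ∉ A`, `A ∪ {ν} ∉ K`. -/
def bierFacetCount {n : ℕ} (K : Finset (Finset (Fin n))) : ℕ :=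
  ((K ×ˢ (Finset.univ : Finset (Fin n))).filter
    (fun p => p.2 ∉ p.1 ∧ insert p.2 p.1 ∉ K)).card

lemma card_filter_product {n : ℕ} (K : Finset (Finset (Fin n)))
    (P : Finset (Fin n) → Fin n → Prop) [∀ A ν, Decidable (P A ν)] :
    ((K ×ˢ (univ : Finset (Fin n))).filter (fun p => P p.1 p.2)).card
      = ∑ A ∈ K, (univ.filter (fun ν => P A ν)).card := by
  rw [card_filter, Finset.sum_product]
  exact Finset.sum_congr rfl fun A _ => (card_filter _ _).symm

lemma key_identity {n : ℕ} (K : Finset (Finset (Fin n)))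
    (hK : ∀ s ∈ K, ∀ t ⊆ s, t ∈ K) :
    (bierFacetCount K : ℤ) = ∑ A ∈ K, ((n : ℤ) - 2 * A.card) := by
  classical
  have h1 : bierFacetCount K
      = ∑ A ∈ K, (univ.filter (fun ν => ν ∉ A ∧ insert ν A ∉ K)).card :=
    card_filter_product K (fun A ν => ν ∉ A ∧ insert ν A ∉ K)
  -- the "inner" edge count equals ∑ |B|
  have hT : ∑ A ∈ K, (univ.filter (fun ν => ν ∉ A ∧ insert ν A ∈ K)).card
      = ∑ B ∈ K, B.card := by
    have e1 : ((K ×ˢ (univ : Finset (Fin n))).filter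
        (fun p => p.2 ∉ p.1 ∧ insert p.2 p.1 ∈ K)).card
        = ∑ A ∈ K, (univ.filter (fun ν => ν ∉ A ∧ insert ν A ∈ K)).card :=
      card_filter_product K (fun A ν => ν ∉ A ∧ insert ν A ∈ K)
    have e2 : ((K ×ˢ (univ : Finset (Fin n))).filter
        (fun p => p.2 ∈ p.1)).card = ∑ B ∈ K, B.card := by
      rw [card_filter_product K (fun A ν => ν ∈ A)]
      apply sum_congr rfl
      intro A _
      congr 1
      simp
    rw [← e1, ← e2]
    apply card_bij (fun p _ => (insert p.2 p.1, p.2))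
    · intro p hp
      simp only [mem_filter, mem_product, mem_univ, and_true, true_and] at hp ⊢
      exact ⟨hp.2.2, mem_insert_self _ _⟩
    · intro p hp q hq h
      simp only [mem_filter, mem_product, mem_univ, and_true, true_and] at hp hq
      simp only [Prod.mk.injEq] at h
      obtain ⟨h1', h2⟩ := h
      have hp1 : p.1 = q.1 := by
        calc p.1 = (insert p.2 p.1).erase p.2 := (Finset.erase_insert hp.2.1).symm
          _ = (insert q.2 q.1).erase q.2 := by rw [h1', h2]
          _ = q.1 := Finset.erase_insert hq.2.1
      exact Prod.ext hp1 h2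
    · intro q hq
      simp only [mem_filter, mem_product, mem_univ, and_true, true_and] at hq
      refine ⟨(q.1.erase q.2, q.2), ?_, ?_⟩
      · simp only [mem_filter, mem_product, mem_univ, and_true, true_and]
        refine ⟨hK q.1 hq.1 _ (erase_subset _ _), notMem_erase _ _, ?_⟩
        rw [Finset.insert_erase hq.2]
        exact hq.1
      · simp [Finset.insert_erase hq.2]
  -- pointwise: out-count + in-count = n - |A|
  have h2 : ∀ A : Finset (Fin n),
      (univ.filter (fun ν => ν ∉ A ∧ insert ν A ∉ K)).card
      + (univ.filter (fun ν => ν ∉ A ∧ insert ν A ∈ K)).card = n - A.card := by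
    intro A
    have hs : (univ.filter (fun ν => (ν : Fin n) ∉ A)) = Aᶜ := by
      ext ν; simp
    have hrw1 : univ.filter (fun ν => ν ∉ A ∧ insert ν A ∉ K)
        = Aᶜ.filter (fun ν => insert ν A ∉ K) := by
      rw [← hs, Finset.filter_filter]
    have hrw2 : univ.filter (fun ν => ν ∉ A ∧ insert ν A ∈ K)
        = Aᶜ.filter (fun ν => insert ν A ∈ K) := by
      rw [← hs, Finset.filter_filter]
    rw [hrw1, hrw2]
    have := Finset.card_filter_add_card_filter_not
      (s := Aᶜ) (p := fun ν => insert ν A ∉ K)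
    simp only [not_not] at this
    rw [this, Finset.card_compl, Fintype.card_fin]
  have hA_le : ∀ A : Finset (Fin n), A.card ≤ n := by
    intro A
    simpa using Finset.card_le_univ A
  have hmain : bierFacetCount K + ∑ B ∈ K, B.card = ∑ A ∈ K, (n - A.card) := by
    rw [h1, ← hT, ← Finset.sum_add_distrib]
    exact sum_congr rfl (fun A _ => h2 A)
  have hz : ((bierFacetCount K : ℤ)) + ∑ B ∈ K, (B.card : ℤ)
      = ∑ A ∈ K, ((n : ℤ) - A.card) := by
    have := congrArg (fun x : ℕ => (x : ℤ)) hmain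
    push_cast at this
    rw [this]
    apply sum_congr rfl
    intro A _
    rw [Nat.cast_sub (hA_le A)]
  have : (bierFacetCount K : ℤ)
      = ∑ A ∈ K, ((n : ℤ) - A.card) - ∑ B ∈ K, (B.card : ℤ) := by linarith
  rw [this, ← Finset.sum_sub_distrib]
  apply sum_congr rfl
  intro A _
  ring

theorem bier_facet_count_odd_max (m : ℕ) (K : Finset (Finset (Fin (2*m+1))))
    (hK : ∀ s ∈ K, ∀ t ⊆ s, t ∈ K) (h0 : ∅ ∈ K)
    (hu : (Finset.univ : Finset (Fin (2*m+1))) ∉ K) :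
    bierFacetCount K
      ≤ bierFacetCount ((Finset.univ : Finset (Fin (2*m+1))).powerset.filter
          (fun S => S.card ≤ m)) ∧
    (bierFacetCount K
        = bierFacetCount ((Finset.univ : Finset (Fin (2*m+1))).powerset.filter
            (fun S => S.card ≤ m)) →
      K = (Finset.univ : Finset (Fin (2*m+1))).powerset.filter (fun S => S.card ≤ m)) := by
  classical
  set Km := ((Finset.univ : Finset (Fin (2*m+1))).powerset.filter (fun S => S.card ≤ m)) with hKmdef
  have memKm : ∀ A : Finset (Fin (2*m+1)), A ∈ Km ↔ A.card ≤ m := by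
    intro A; simp [hKmdef]
  have hKmdown : ∀ s ∈ Km, ∀ t ⊆ s, t ∈ Km := by
    intro s hs t hts
    rw [memKm] at hs ⊢
    exact le_trans (card_le_card hts) hs
  set w : Finset (Fin (2*m+1)) → ℤ := fun A => ((2*m+1 : ℕ) : ℤ) - 2 * A.card with hw
  have idK : (bierFacetCount K : ℤ) = ∑ A ∈ K, w A := key_identity K hK
  have idKm : (bierFacetCount Km : ℤ) = ∑ A ∈ Km, w A := key_identity Km hKmdown
  set s1 := K.filter (fun A => A.card ≤ m) with hs1
  set s2 := K.filter (fun A => ¬ A.card ≤ m) with hs2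
  have hsplit : ∑ A ∈ K, w A = ∑ A ∈ s1, w A + ∑ A ∈ s2, w A :=
    (Finset.sum_filter_add_sum_filter_not K _ w).symm
  have hneg : ∀ A ∈ s2, w A ≤ -1 := by
    intro A hA
    rw [hs2, mem_filter] at hA
    have hc : m + 1 ≤ A.card := by omega
    simp only [hw]
    have : (m : ℤ) + 1 ≤ (A.card : ℤ) := by exact_mod_cast hc
    push_cast
    linarith
  have hs2le : ∑ A ∈ s2, w A ≤ 0 := by
    apply Finset.sum_nonpos
    intro A hA
    linarith [hneg A hA]
  have hsub : s1 ⊆ Km := by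
    intro A hA
    rw [hs1, mem_filter] at hA
    rw [memKm]
    exact hA.2
  have hpos : ∀ A ∈ Km, 1 ≤ w A := by
    intro A hA
    rw [memKm] at hA
    simp only [hw]
    have : (A.card : ℤ) ≤ (m : ℤ) := by exact_mod_cast hA
    push_cast
    linarith
  have hmono : ∑ A ∈ s1, w A ≤ ∑ A ∈ Km, w A := by
    apply Finset.sum_le_sum_of_subset_of_nonneg hsub
    intro A hA _
    linarith [hpos A hA]
  constructor
  · have : (bierFacetCount K : ℤ) ≤ (bierFacetCount Km : ℤ) := by
      rw [idK, idKm, hsplit]; linarith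
    exact_mod_cast this
  · intro heq
    have hsum : ∑ A ∈ K, w A = ∑ A ∈ Km, w A := by
      rw [← idK, ← idKm]; exact_mod_cast heq
    have hz2 : ∑ A ∈ s2, w A = 0 := by
      rw [hsplit] at hsum; linarith
    have hz1 : ∑ A ∈ s1, w A = ∑ A ∈ Km, w A := by
      rw [hsplit] at hsum; linarith
    have hs2empty : s2 = ∅ := by
      by_contra hne
      obtain ⟨A, hA⟩ := Finset.nonempty_of_ne_empty hne
      have hle : ∑ B ∈ s2, w B ≤ s2.card • (-1 : ℤ) :=
        Finset.sum_le_card_nsmul s2 w (-1) hneg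
      have hcard : 1 ≤ s2.card := Finset.card_pos.mpr ⟨A, hA⟩
      have : s2.card • (-1 : ℤ) = -(s2.card : ℤ) := by simp
      rw [this] at hle
      have : (1 : ℤ) ≤ (s2.card : ℤ) := by exact_mod_cast hcard
      linarith [hz2]
    have hdiffsum : ∑ A ∈ Km \ s1, w A = 0 := by
      have := Finset.sum_sdiff (f := w) hsub
      linarith [hz1, this]
    have hdiffempty : Km \ s1 = ∅ := by
      by_contra hne
      obtain ⟨A, hA⟩ := Finset.nonempty_of_ne_empty hne
      have hle : (Km \ s1).card • (1 : ℤ) ≤ ∑ B ∈ Km \ s1, w B :=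
        Finset.card_nsmul_le_sum (Km \ s1) w 1
          (fun B hB => hpos B (Finset.mem_sdiff.mp hB).1)
      have hcard : 1 ≤ (Km \ s1).card := Finset.card_pos.mpr ⟨A, hA⟩
      have : (1 : ℤ) ≤ ((Km \ s1).card : ℤ) := by exact_mod_cast hcard
      rw [nsmul_eq_mul, mul_one] at hle
      linarith [hdiffsum]
    apply Finset.Subset.antisymm
    · intro A hA
      rw [memKm]
      by_contra hc
      have : A ∈ s2 := by rw [hs2, mem_filter]; exact ⟨hA, hc⟩
      rw [hs2empty] at this
      exact absurd this (Finset.notMem_empty A)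
    · intro A hA
      have : A ∈ s1 := by
        by_contra hc
        have : A ∈ Km \ s1 := Finset.mem_sdiff.mpr ⟨hA, hc⟩
        rw [hdiffempty] at this
        exact absurd this (Finset.notMem_empty A)
      rw [hs1, mem_filter] at this
      exact this.1
end

section
/- When n = 2m is even, a simplicial complex K ⊊ 2^[n] with ∅ ∈ K maximizes the count |{ (A, ν) : A ∈ K, ν ∉ A, A ∪ {ν} ∉ K }| if and only if { S : |S| ≤ m−1 } ⊆ K ⊆ { S : |S| ≤ m }. -/
open Finset Nat

/-- The set of facets (cut edges). -/
def bierE {n : ℕ} (K : Finset (Finset (Fin n))) : Finset (Finset (Fin n) × Fin n) :=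
  (K ×ˢ (Finset.univ : Finset (Fin n))).filter
    (fun p => p.2 ∉ p.1 ∧ insert p.2 p.1 ∉ K)

lemma bierFacetCount_eq {n : ℕ} (K : Finset (Finset (Fin n))) :
    bierFacetCount K = (bierE K).card := rfl

lemma mem_bierE {n : ℕ} {K : Finset (Finset (Fin n))} {p : Finset (Fin n) × Fin n} :
    p ∈ bierE K ↔ p.1 ∈ K ∧ p.2 ∉ p.1 ∧ insert p.2 p.1 ∉ K := by
  simp [bierE, Finset.mem_filter, Finset.mem_product, and_assoc]

/-- The weight of a cut edge whose bottom has `k` elements. -/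
def wt (n k : ℕ) : ℕ := k ! * (n - 1 - k)!

lemma wt_pos (n k : ℕ) : 0 < wt n k := Nat.mul_pos (Nat.factorial_pos _) (Nat.factorial_pos _)

/-- Key invariant: the weighted sum of cut edges is `n!`. -/
lemma sum_wt_aux {n : ℕ} : ∀ (c : ℕ) (K : Finset (Finset (Fin n))), K.card ≤ c →
    (∀ s ∈ K, ∀ t ⊆ s, t ∈ K) → ∅ ∈ K → (Finset.univ : Finset (Fin n)) ∉ K →
    ∑ p ∈ bierE K, wt n p.1.card = n ! := by
  intro c
  induction c with
  | zero =>
    intro K hc h0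
    simp [Finset.card_eq_zero.mp (Nat.le_zero.mp hc)] at *
  | succ c ih =>
    intro K hc hK h0 hu
    have hn : 0 < n := by
      rcases Nat.eq_zero_or_pos n with h | h
      · exfalso; apply hu; subst h
        have : (Finset.univ : Finset (Fin 0)) = ∅ := rfl
        rw [this]; exact h0
      · exact h
    by_cases hK1 : K = {∅}
    · subst hK1
      have hE : bierE ({∅} : Finset (Finset (Fin n))) = ({∅} : Finset (Finset (Fin n))) ×ˢ Finset.univ := by
        ext ⟨A, ν⟩
        simp only [mem_bierE, Finset.mem_product, Finset.mem_singleton, Finset.mem_univ, and_true]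
        constructor
        · rintro ⟨h1, _, _⟩; exact h1
        · rintro h1; subst h1
          refine ⟨rfl, Finset.notMem_empty ν, ?_⟩
          simp
      rw [hE, Finset.sum_product]
      simp only [Finset.sum_singleton, Finset.card_empty, Finset.sum_const, Finset.card_univ,
        Fintype.card_fin, smul_eq_mul, wt, Nat.factorial_zero, one_mul, Nat.sub_zero]
      exact Nat.mul_factorial_pred hn.ne'
    · -- pick a maximal nonempty face F
      have hne : (K.erase ∅).Nonempty := by
        rw [← Finset.card_pos, Finset.card_erase_of_mem h0]
        have h2 : 1 ≤ K.card := Finset.card_pos.mpr ⟨∅, h0⟩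
        rcases Nat.eq_or_lt_of_le h2 with h | h
        · exfalso; apply hK1
          obtain ⟨a, ha⟩ := Finset.card_eq_one.mp h.symm
          rw [ha] at h0 ⊢
          rw [Finset.mem_singleton.mp h0]
        · omega
      obtain ⟨F, hFmem, hFmax⟩ := (K.erase ∅).exists_max_image Finset.card hne
      obtain ⟨hFne, hFK⟩ := Finset.mem_erase.mp hFmem
      have hf1 : 1 ≤ F.card := Nat.one_le_iff_ne_zero.mpr (by simpa using hFne)
      have hfn : F.card < n := by
        rcases Nat.lt_or_ge F.card n with h | h
        · exact h
        · exfalso; apply hu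
          have hle := Finset.card_le_univ F
          rw [Fintype.card_fin] at hle
          have : F = Finset.univ := Finset.eq_univ_of_card F (by rw [Fintype.card_fin]; omega)
          rwa [this] at hFK
      -- maximality: no superset of F in K other than F
      have hsup : ∀ s ∈ K, F ⊆ s → s = F := by
        intro s hs hFs
        refine (Finset.eq_of_subset_of_card_le hFs ?_).symm
        apply hFmax
        refine Finset.mem_erase.mpr ⟨?_, hs⟩
        intro h; subst h; exact hFne (Finset.subset_empty.mp hFs)
      have hins : ∀ ν : Fin n, ν ∉ F → insert ν F ∉ K := by
        intro ν hν hmem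
        have := hsup _ hmem (Finset.subset_insert ν F)
        rw [this] at hmem
        have : ν ∈ F := by rw [← this]; exact Finset.mem_insert_self ν F
        exact hν this
      set K' := K.erase F with hK'def
      have hK'K : K' ⊆ K := Finset.erase_subset F K
      have hK'down : ∀ s ∈ K', ∀ t ⊆ s, t ∈ K' := by
        intro s hs t hts
        obtain ⟨hsne, hsK⟩ := Finset.mem_erase.mp hs
        refine Finset.mem_erase.mpr ⟨?_, hK s hsK t hts⟩
        intro h; subst h
        exact hsne (hsup s hsK hts)
      have h0' : ∅ ∈ K' := Finset.mem_erase.mpr ⟨Ne.symm hFne, h0⟩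
      have hu' : (Finset.univ : Finset (Fin n)) ∉ K' := fun h => hu (hK'K h)
      have hc' : K'.card ≤ c := by
        rw [hK'def, Finset.card_erase_of_mem hFK]; omega
      have ihK' := ih K' hc' hK'down h0' hu'
      -- the removed edges and added edges
      set R : Finset (Finset (Fin n) × Fin n) := ({F} : Finset (Finset (Fin n))) ×ˢ Fᶜ with hRdef
      set Ad : Finset (Finset (Fin n) × Fin n) := F.image (fun ν => (F.erase ν, ν)) with hAdef
      have keyeq : bierE K' ∪ R = bierE K ∪ Ad := by
        ext ⟨A, ν⟩
        simp only [Finset.mem_union, mem_bierE, hRdef, hAdef, Finset.mem_product,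
          Finset.mem_singleton, Finset.mem_compl, Finset.mem_image, hK'def, Finset.mem_erase]
        constructor
        · rintro (⟨⟨hAF, hAK⟩, hν, hinsK'⟩ | ⟨hAF, hν⟩)
          · by_cases hiK : insert ν A ∈ K
            · right
              have hiF : insert ν A = F := by
                by_contra h
                exact hinsK' ⟨h, hiK⟩
              refine ⟨ν, ?_, ?_⟩
              · rw [← hiF]; exact Finset.mem_insert_self ν A
              · have hEA : F.erase ν = A := by rw [← hiF, Finset.erase_insert hν]
                rw [hEA]
            · exact Or.inl ⟨hAK, hν, hiK⟩
          · subst hAF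
            exact Or.inl ⟨hFK, hν, hins ν hν⟩
        · rintro (⟨hAK, hν, hinsK⟩ | ⟨x, hx, hxeq⟩)
          · by_cases hAF : A = F
            · exact Or.inr ⟨hAF, hAF ▸ hν⟩
            · exact Or.inl ⟨⟨hAF, hAK⟩, hν, fun h => hinsK h.2⟩
          · obtain ⟨h1, h2⟩ := Prod.mk.injEq _ _ _ _ ▸ hxeq
            rw [← h1, ← h2]
            left
            refine ⟨⟨?_, hK F hFK _ (Finset.erase_subset x F)⟩, Finset.notMem_erase x F, ?_⟩
            · intro h
              have := Finset.card_erase_of_mem hx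
              rw [h] at this; omega
            · rw [Finset.insert_erase hx]
              simp
      have hdisj1 : Disjoint (bierE K') R := by
        rw [Finset.disjoint_left]
        rintro ⟨A, ν⟩ hp hr
        simp only [hRdef, Finset.mem_product, Finset.mem_singleton] at hr
        have := (mem_bierE.mp hp).1
        rw [hr.1] at this
        exact (Finset.mem_erase.mp this).1 rfl
      have hdisj2 : Disjoint (bierE K) Ad := by
        rw [Finset.disjoint_left]
        rintro ⟨A, ν⟩ hp ha
        simp only [hAdef, Finset.mem_image] at ha
        obtain ⟨x, hx, hxeq⟩ := ha
        obtain ⟨h1, h2⟩ := Prod.mk.injEq _ _ _ _ ▸ hxeq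
        subst h2; subst h1
        have := (mem_bierE.mp hp).2.2
        rw [Finset.insert_erase hx] at this
        exact this hFK
      have hsums : ∑ p ∈ bierE K', wt n p.1.card + ∑ p ∈ R, wt n p.1.card
          = ∑ p ∈ bierE K, wt n p.1.card + ∑ p ∈ Ad, wt n p.1.card := by
        rw [← Finset.sum_union hdisj1, ← Finset.sum_union hdisj2, keyeq]
      have hsumR : ∑ p ∈ R, wt n p.1.card = (n - F.card) * wt n F.card := by
        rw [hRdef, Finset.sum_product]
        simp [Finset.card_compl]
      have hsumAd : ∑ p ∈ Ad, wt n p.1.card = F.card * wt n (F.card - 1) := by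
        rw [hAdef, Finset.sum_image (by intro x hx y hy h; exact (Prod.mk.injEq _ _ _ _ ▸ h).2)]
        rw [Finset.sum_congr rfl (fun x hx => by rw [Finset.card_erase_of_mem hx])]
        simp [mul_comm]
      have harith : (n - F.card) * wt n F.card = F.card * wt n (F.card - 1) := by
        set f := F.card
        have h1 : n - 1 - f = (n - f) - 1 := by omega
        have h2 : n - 1 - (f - 1) = n - f := by omega
        rw [wt, wt, h1, h2]
        calc (n - f) * (f ! * ((n - f) - 1)!) = f ! * ((n - f) * ((n-f) - 1)!) := by ring
          _ = f ! * (n - f)! := by rw [Nat.mul_factorial_pred (by omega)]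
          _ = f * ((f - 1)! * (n - f)!) := by
              rw [← Nat.mul_factorial_pred (by omega : f ≠ 0)]; ring
      rw [hsumR, harith, ← hsumAd] at hsums
      rw [ihK'] at hsums
      omega

lemma sum_wt {n : ℕ} (K : Finset (Finset (Fin n)))
    (hK : ∀ s ∈ K, ∀ t ⊆ s, t ∈ K) (h0 : ∅ ∈ K)
    (hu : (Finset.univ : Finset (Fin n)) ∉ K) :
    ∑ p ∈ bierE K, wt n p.1.card = n ! :=
  sum_wt_aux K.card K le_rfl hK h0 hu

/-- elementary step identity -/
lemma wt_step (m j : ℕ) (hj : j ≤ 2*m - 2) (hm : 0 < m) :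
    (j + 1) * wt (2*m) j = (2*m - 1 - j) * wt (2*m) (j + 1) := by
  rw [wt, wt]
  have h1 : 2*m - 1 - (j+1) = (2*m - 1 - j) - 1 := by omega
  rw [h1]
  calc (j+1) * (j ! * (2*m-1-j)!) = (j+1) * j ! * (2*m-1-j)! := by ring
    _ = (j+1)! * (2*m-1-j)! := by rw [Nat.factorial_succ]
    _ = (j+1)! * ((2*m-1-j) * ((2*m-1-j) - 1)!) := by
        rw [Nat.mul_factorial_pred (by omega : 2*m-1-j ≠ 0)]
    _ = (2*m-1-j) * ((j+1)! * ((2*m-1-j)-1)!) := by ring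

lemma wt_step_dec (m j : ℕ) (hj : j + 1 ≤ m - 1) (hm : 0 < m) :
    wt (2*m) (j+1) < wt (2*m) j := by
  have hid := wt_step m j (by omega) hm
  have hlt : j + 1 < 2*m - 1 - j := by omega
  have hpos := wt_pos (2*m) j
  nlinarith [wt_pos (2*m) (j+1)]

lemma wt_step_inc (m j : ℕ) (hj1 : m ≤ j) (hj2 : j ≤ 2*m - 2) (hm : 0 < m) :
    wt (2*m) j < wt (2*m) (j+1) := by
  have hid := wt_step m j hj2 hm
  have hlt : 2*m - 1 - j < j + 1 := by omega
  nlinarith [wt_pos (2*m) (j+1), wt_pos (2*m) j]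

lemma wt_middle (m : ℕ) (hm : 0 < m) :
    wt (2*m) (m-1) = (m-1)! * m ! ∧ wt (2*m) m = (m-1)! * m ! := by
  constructor
  · rw [wt]; congr 1; congr 1; omega
  · rw [wt]
    have : 2*m - 1 - m = m - 1 := by omega
    rw [this, mul_comm]

/-- values left of the middle -/
lemma wt_min_left (m : ℕ) (hm : 0 < m) :
    ∀ d k, k + d ≤ m - 1 → wt (2*m) (k + d) ≤ wt (2*m) k ∧ (d ≠ 0 → wt (2*m) (k+d) < wt (2*m) k) := by
  intro d
  induction d with
  | zero => intro k _; simp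
  | succ d ihd =>
    intro k hk
    have h1 := ihd (k+1) (by omega)
    have h2 := wt_step_dec m k (by omega) hm
    have h3 : k + (d+1) = (k+1) + d := by omega
    rw [h3]
    exact ⟨le_of_lt (lt_of_le_of_lt h1.1 h2), fun _ => lt_of_le_of_lt h1.1 h2⟩

lemma wt_min_right (m : ℕ) (hm : 0 < m) :
    ∀ d, m + d ≤ 2*m - 1 → wt (2*m) m ≤ wt (2*m) (m + d) ∧ (d ≠ 0 → wt (2*m) m < wt (2*m) (m+d)) := by
  intro d
  induction d with
  | zero => simp
  | succ d ihd =>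
    intro hk
    have h1 := ihd (by omega)
    have h2 := wt_step_inc m (m+d) (by omega) (by omega) hm
    have h3 : m + (d+1) = (m+d) + 1 := by omega
    rw [h3]
    exact ⟨le_of_lt (lt_of_le_of_lt h1.1 h2), fun _ => lt_of_le_of_lt h1.1 h2⟩

lemma wt_ge_min (m k : ℕ) (hm : 0 < m) (hk : k ≤ 2*m - 1) :
    (m-1)! * m ! ≤ wt (2*m) k := by
  obtain ⟨hmid1, hmid2⟩ := wt_middle m hm
  rcases Nat.lt_or_ge k m with h | h
  · -- k ≤ m - 1
    have := (wt_min_left m hm (m - 1 - k) k (by omega)).1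
    have he : k + (m - 1 - k) = m - 1 := by omega
    rw [he, hmid1] at this
    exact this
  · have := (wt_min_right m hm (k - m) (by omega)).1
    have he : m + (k - m) = k := by omega
    rw [he, hmid2] at this
    exact this

lemma wt_gt_min (m k : ℕ) (hm : 0 < m) (hk : k ≤ 2*m - 1) (h1 : k ≠ m - 1) (h2 : k ≠ m) :
    (m-1)! * m ! < wt (2*m) k := by
  obtain ⟨hmid1, hmid2⟩ := wt_middle m hm
  rcases Nat.lt_or_ge k m with h | h
  · have := (wt_min_left m hm (m - 1 - k) k (by omega)).2 (by omega)
    have he : k + (m - 1 - k) = m - 1 := by omega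
    rw [he, hmid1] at this
    exact this
  · have := (wt_min_right m hm (k - m) (by omega)).2 (by omega)
    have he : m + (k - m) = k := by omega
    rw [he, hmid2] at this
    exact this

lemma minw_mul_M (m : ℕ) (hm : 0 < m) :
    (m * Nat.choose (2*m) m) * ((m-1)! * m !) = (2*m)! := by
  have h := Nat.choose_mul_factorial_mul_factorial (by omega : m ≤ 2*m)
  have h2 : m * (m-1)! = m ! := Nat.mul_factorial_pred hm.ne'
  have : 2*m - m = m := by omega
  rw [this] at h
  calc (m * Nat.choose (2*m) m) * ((m-1)! * m !)
      = Nat.choose (2*m) m * (m * (m-1)!) * m ! := by ring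
    _ = Nat.choose (2*m) m * m ! * m ! := by rw [h2]
    _ = (2*m)! := h

lemma card_lt_of_mem {n : ℕ} {K : Finset (Finset (Fin n))} {A : Finset (Fin n)}
    (hu : (Finset.univ : Finset (Fin n)) ∉ K) (hA : A ∈ K) : A.card < n := by
  rcases Nat.lt_or_ge A.card n with h | h
  · exact h
  · exfalso
    have hle := Finset.card_le_univ A
    rw [Fintype.card_fin] at hle
    have : A = Finset.univ := Finset.eq_univ_of_card A (by rw [Fintype.card_fin]; omega)
    rw [this] at hA; exact hu hA

/-- upper bound -/
lemma count_le (m : ℕ) (hm : 0 < m) (K : Finset (Finset (Fin (2*m))))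
    (hK : ∀ s ∈ K, ∀ t ⊆ s, t ∈ K) (h0 : ∅ ∈ K)
    (hu : (Finset.univ : Finset (Fin (2*m))) ∉ K) :
    bierFacetCount K ≤ m * Nat.choose (2*m) m := by
  have hsum := sum_wt K hK h0 hu
  have hbound : (bierE K).card * ((m-1)! * m !) ≤ (2*m)! := by
    rw [← hsum]
    calc (bierE K).card * ((m-1)! * m !) = ∑ _p ∈ bierE K, (m-1)! * m ! := by
          rw [Finset.sum_const, smul_eq_mul]
      _ ≤ ∑ p ∈ bierE K, wt (2*m) p.1.card := by
          apply Finset.sum_le_sum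
          intro p hp
          exact wt_ge_min m p.1.card hm
            (by have := card_lt_of_mem hu (mem_bierE.mp hp).1; omega)
  rw [← minw_mul_M m hm] at hbound
  rw [bierFacetCount_eq]
  exact Nat.le_of_mul_le_mul_right hbound (Nat.mul_pos (Nat.factorial_pos _) (Nat.factorial_pos _))

/-- If K satisfies the sandwich condition, every cut edge is at level m-1 or m. -/
lemma count_eq_of_sandwich (m : ℕ) (hm : 0 < m) (K : Finset (Finset (Fin (2*m))))
    (hK : ∀ s ∈ K, ∀ t ⊆ s, t ∈ K) (h0 : ∅ ∈ K)
    (hu : (Finset.univ : Finset (Fin (2*m))) ∉ K)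
    (hlo : (Finset.univ : Finset (Fin (2*m))).powerset.filter (fun S => S.card ≤ m - 1) ⊆ K)
    (hhi : K ⊆ (Finset.univ : Finset (Fin (2*m))).powerset.filter (fun S => S.card ≤ m)) :
    bierFacetCount K = m * Nat.choose (2*m) m := by
  have hlevel : ∀ p ∈ bierE K, wt (2*m) p.1.card = (m-1)! * m ! := by
    rintro ⟨A, ν⟩ hp
    obtain ⟨hA, hν, hins⟩ := mem_bierE.mp hp
    dsimp only at hA hν hins ⊢
    have hAm : A.card ≤ m := by
      have := hhi hA; simp only [Finset.mem_filter] at this; exact this.2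
    have hAlow : m - 1 ≤ A.card := by
      by_contra h
      apply hins
      apply hlo
      simp only [Finset.mem_filter, Finset.mem_powerset]
      refine ⟨Finset.subset_univ _, ?_⟩
      rw [Finset.card_insert_of_notMem hν]
      omega
    obtain ⟨hmid1, hmid2⟩ := wt_middle m hm
    rcases Nat.eq_or_lt_of_le hAlow with h | h
    · rw [← h]; exact hmid1
    · have : A.card = m := by omega
      rw [this]; exact hmid2
  have hsum := sum_wt K hK h0 hu
  rw [Finset.sum_congr rfl hlevel, Finset.sum_const, smul_eq_mul] at hsum
  rw [← minw_mul_M m hm] at hsum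
  rw [bierFacetCount_eq]
  exact Nat.eq_of_mul_eq_mul_right (Nat.mul_pos (Nat.factorial_pos _) (Nat.factorial_pos _)) hsum

/-- If the count achieves the max, K satisfies the sandwich condition. -/
lemma sandwich_of_count_eq (m : ℕ) (hm : 0 < m) (K : Finset (Finset (Fin (2*m))))
    (hK : ∀ s ∈ K, ∀ t ⊆ s, t ∈ K) (h0 : ∅ ∈ K)
    (hu : (Finset.univ : Finset (Fin (2*m))) ∉ K)
    (heq : bierFacetCount K = m * Nat.choose (2*m) m) :
    (Finset.univ : Finset (Fin (2*m))).powerset.filter (fun S => S.card ≤ m - 1) ⊆ K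
      ∧ K ⊆ (Finset.univ : Finset (Fin (2*m))).powerset.filter (fun S => S.card ≤ m) := by
  have hsum := sum_wt K hK h0 hu
  -- all weights equal the min
  have hconst : ∀ p ∈ bierE K, wt (2*m) p.1.card = (m-1)! * m ! := by
    have hle : ∀ p ∈ bierE K, (m-1)! * m ! ≤ wt (2*m) p.1.card := by
      intro p hp
      exact wt_ge_min m p.1.card hm
        (by have := card_lt_of_mem hu (mem_bierE.mp hp).1; omega)
    have hsum2 : ∑ _p ∈ bierE K, (m-1)! * m ! = ∑ p ∈ bierE K, wt (2*m) p.1.card := by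
      rw [Finset.sum_const, smul_eq_mul, hsum, ← bierFacetCount_eq, heq, minw_mul_M m hm]
    intro p hp
    exact ((Finset.sum_eq_sum_iff_of_le hle).mp hsum2 p hp).symm
  have hlevels : ∀ p ∈ bierE K, p.1.card = m - 1 ∨ p.1.card = m := by
    intro p hp
    by_contra h
    push_neg at h
    have := wt_gt_min m p.1.card hm
      (by have := card_lt_of_mem hu (mem_bierE.mp hp).1; omega) h.1 h.2
    rw [hconst p hp] at this
    omega
  constructor
  · -- all small sets in K
    intro S hS
    simp only [Finset.mem_filter, Finset.mem_powerset] at hS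
    by_contra hSK
    -- take maximal subset of S in K
    have hne : (K.filter (· ⊆ S)).Nonempty := ⟨∅, Finset.mem_filter.mpr ⟨h0, Finset.empty_subset S⟩⟩
    obtain ⟨A, hAmem, hAmax⟩ := (K.filter (· ⊆ S)).exists_max_image Finset.card hne
    obtain ⟨hAK, hAS⟩ := Finset.mem_filter.mp hAmem
    have hAneS : A ≠ S := fun h => hSK (h ▸ hAK)
    obtain ⟨ν, hνS, hνA⟩ := Finset.exists_of_ssubset (Finset.ssubset_iff_subset_ne.mpr ⟨hAS, hAneS⟩)
    have hinsS : insert ν A ⊆ S := Finset.insert_subset hνS hAS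
    have hinsK : insert ν A ∉ K := by
      intro h
      have := hAmax _ (Finset.mem_filter.mpr ⟨h, hinsS⟩)
      rw [Finset.card_insert_of_notMem hνA] at this
      omega
    have hp : (A, ν) ∈ bierE K := mem_bierE.mpr ⟨hAK, hνA, hinsK⟩
    have hcard : A.card < S.card := Finset.card_lt_card (Finset.ssubset_iff_subset_ne.mpr ⟨hAS, hAneS⟩)
    have hSm : S.card ≤ m - 1 := hS.2
    have hlev : A.card = m - 1 ∨ A.card = m := hlevels (A, ν) hp
    rcases hlev with h' | h' <;> omega
  · -- no big sets in K
    intro A hAK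
    simp only [Finset.mem_filter, Finset.mem_powerset]
    refine ⟨Finset.subset_univ _, ?_⟩
    by_contra h
    push_neg at h
    -- take maximal superset of A in K
    have hne : (K.filter (A ⊆ ·)).Nonempty := ⟨A, Finset.mem_filter.mpr ⟨hAK, Finset.Subset.refl A⟩⟩
    obtain ⟨B, hBmem, hBmax⟩ := (K.filter (A ⊆ ·)).exists_max_image Finset.card hne
    obtain ⟨hBK, hAB⟩ := Finset.mem_filter.mp hBmem
    have hBlt : B.card < 2*m := card_lt_of_mem hu hBK
    have hBneU : B ≠ Finset.univ := fun h => hu (h ▸ hBK)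
    obtain ⟨ν, _, hνB⟩ := Finset.exists_of_ssubset
      (Finset.ssubset_iff_subset_ne.mpr ⟨Finset.subset_univ B, hBneU⟩)
    have hinsK : insert ν B ∉ K := by
      intro hmem
      have := hBmax _ (Finset.mem_filter.mpr ⟨hmem, hAB.trans (Finset.subset_insert ν B)⟩)
      rw [Finset.card_insert_of_notMem hνB] at this
      omega
    have hp : (B, ν) ∈ bierE K := mem_bierE.mpr ⟨hBK, hνB, hinsK⟩
    have hlev : B.card = m - 1 ∨ B.card = m := hlevels (B, ν) hp
    have hcard : m < A.card := h
    have hAB' := Finset.card_le_card hAB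
    rcases hlev with h' | h' <;> omega

theorem bier_facet_count_even_max (m : ℕ) (hm : 0 < m)
    (K : Finset (Finset (Fin (2*m))))
    (hK : ∀ s ∈ K, ∀ t ⊆ s, t ∈ K) (h0 : ∅ ∈ K)
    (hu : (Finset.univ : Finset (Fin (2*m))) ∉ K) :
    (∀ K' : Finset (Finset (Fin (2*m))),
        (∀ s ∈ K', ∀ t ⊆ s, t ∈ K') → ∅ ∈ K' →
        (Finset.univ : Finset (Fin (2*m))) ∉ K' →
        bierFacetCount K' ≤ bierFacetCount K)
      ↔ ((Finset.univ : Finset (Fin (2*m))).powerset.filter (fun S => S.card ≤ m - 1) ⊆ K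
          ∧ K ⊆ (Finset.univ : Finset (Fin (2*m))).powerset.filter (fun S => S.card ≤ m)) := by
  -- the canonical maximizer
  set K0 : Finset (Finset (Fin (2*m))) :=
    (Finset.univ : Finset (Fin (2*m))).powerset.filter (fun S => S.card ≤ m - 1) with hK0def
  have hK0down : ∀ s ∈ K0, ∀ t ⊆ s, t ∈ K0 := by
    intro s hs t hts
    simp only [hK0def, Finset.mem_filter, Finset.mem_powerset] at *
    exact ⟨Finset.subset_univ _, le_trans (Finset.card_le_card hts) hs.2⟩
  have hK00 : ∅ ∈ K0 := by
    simp [hK0def]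
  have hK0u : (Finset.univ : Finset (Fin (2*m))) ∉ K0 := by
    simp only [hK0def, Finset.mem_filter, Finset.mem_powerset, Finset.card_univ, Fintype.card_fin]
    intro h
    omega
  have hK0count : bierFacetCount K0 = m * Nat.choose (2*m) m := by
    apply count_eq_of_sandwich m hm K0 hK0down hK00 hK0u
    · exact subset_refl _
    · intro S hS
      simp only [hK0def, Finset.mem_filter, Finset.mem_powerset] at *
      exact ⟨hS.1, by omega⟩
  constructor
  · intro hmax
    apply sandwich_of_count_eq m hm K hK h0 hu
    have h1 := hmax K0 hK0down hK00 hK0u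
    have h2 := count_le m hm K hK h0 hu
    omega
  · intro hrhs
    intro K' hK' h0' hu'
    rw [count_eq_of_sandwich m hm K hK h0 hu hrhs.1 hrhs.2]
    exact count_le m hm K' hK' h0' hu'
end

section
/- Let u_1,...,u_n be a circuit in ℝ^{n-1} (spanning, with Σ u_i = 0), Δ = conv{u_1,...,u_n}, ∇ = −Δ. For x = Σ λ_i u_i with Σ λ_i = 0, the Minkowski functional of Δ satisfies μ_Δ(x) = n · max_i (λ_i)^−, where (t)^− = max{0, −t}. -/
open Finset Pointwise

/-- Kernel of the linear-combination map of a circuit is the line of constant vectors. -/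
lemma circuit_ker (n : ℕ) (hn : 0 < n) (u : Fin n → (Fin (n-1) → ℝ))
    (hspan : Submodule.span ℝ (Set.range u) = ⊤)
    (hsum : ∑ i, u i = 0)
    (d : Fin n → ℝ) (hd : ∑ i, d i • u i = 0) :
    ∃ c : ℝ, ∀ i, d i = c := by
  classical
  set φ : (Fin n → ℝ) →ₗ[ℝ] (Fin (n-1) → ℝ) := Fintype.linearCombination ℝ u with hφ
  have hrange : LinearMap.range φ = ⊤ := by
    rw [hφ, Fintype.range_linearCombination, hspan]
  have hker : Module.finrank ℝ (LinearMap.ker φ) = 1 := by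
    have h := LinearMap.finrank_range_add_finrank_ker φ
    rw [hrange] at h
    simp only [finrank_top, Module.finrank_pi, Fintype.card_fin] at h
    omega
  set v : Fin n → ℝ := fun _ => (1 : ℝ) with hv
  have hvmem : v ∈ LinearMap.ker φ := by
    simp [hφ, Fintype.linearCombination_apply, hv, hsum]
  have hvne : v ≠ 0 := by
    intro h
    have := congrFun h ⟨0, hn⟩
    simpa [hv] using this
  have hle : (Submodule.span ℝ {v}) ≤ LinearMap.ker φ := by
    rw [Submodule.span_le, Set.singleton_subset_iff]
    exact hvmem
  have heq : (Submodule.span ℝ {v}) = LinearMap.ker φ := by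
    apply Submodule.eq_of_le_of_finrank_le hle
    rw [hker, finrank_span_singleton hvne]
  have hdmem : d ∈ LinearMap.ker φ := by
    simp [hφ, Fintype.linearCombination_apply, hd]
  rw [← heq, Submodule.mem_span_singleton] at hdmem
  obtain ⟨c, hc⟩ := hdmem
  exact ⟨c, fun i => by have := congrFun hc i; simpa [hv] using this.symm⟩

/-- Extract weights over `Fin n` from membership in the convex hull of the range. -/
lemma exists_weights {n : ℕ} (u : Fin n → (Fin (n-1) → ℝ)) {x : Fin (n-1) → ℝ}
    (hx : x ∈ convexHull ℝ (Set.range u)) :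
    ∃ w : Fin n → ℝ, (∀ i, 0 ≤ w i) ∧ ∑ i, w i = 1 ∧ ∑ i, w i • u i = x := by
  classical
  rw [convexHull_range_eq_exists_affineCombination] at hx
  obtain ⟨s, w, hw₀, hw₁, hx⟩ := hx
  refine ⟨fun i => if i ∈ s then w i else 0, fun i => ?_, ?_, ?_⟩
  · by_cases h : i ∈ s
    · simpa [h] using hw₀ i h
    · simp [h]
  · show ∑ i, (if i ∈ s then w i else 0) = 1
    rw [Finset.sum_ite_mem, Finset.univ_inter]
    exact hw₁
  · rw [affineCombination_eq_centerMass hw₁, Finset.centerMass_eq_of_sum_1 _ _ hw₁] at hx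
    rw [← hx]
    show ∑ i, (if i ∈ s then w i else 0) • u i = ∑ i ∈ s, w i • u i
    simp only [ite_smul, zero_smul]
    rw [Finset.sum_ite_mem, Finset.univ_inter]

theorem gauge_simplex_eq (n : ℕ) (hn : 0 < n) (u : Fin n → (Fin (n-1) → ℝ))
    (hspan : Submodule.span ℝ (Set.range u) = ⊤)
    (hsum : ∑ i, u i = 0)
    (l : Fin n → ℝ) (hl : ∑ i, l i = 0) :
    gauge (convexHull ℝ (Set.range u)) (∑ i, l i • u i)
      = n * (Finset.univ.sup'
          (Finset.univ_nonempty_iff.mpr (Fin.pos_iff_nonempty.mp hn))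
          (fun i => max 0 (-(l i)))) := by
  classical
  have hne : (Finset.univ : Finset (Fin n)).Nonempty :=
    Finset.univ_nonempty_iff.mpr (Fin.pos_iff_nonempty.mp hn)
  set M : ℝ := Finset.univ.sup'
      (Finset.univ_nonempty_iff.mpr (Fin.pos_iff_nonempty.mp hn))
      (fun i => max 0 (-(l i))) with hMdef
  have hM0 : 0 ≤ M := by
    obtain ⟨i, _⟩ := hne
    rw [hMdef]
    exact le_trans (le_max_left 0 (-(l i))) (Finset.le_sup' (fun i => max 0 (-(l i))) (Finset.mem_univ i))
  have hMl : ∀ i, -(l i) ≤ M := by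
    intro i
    rw [hMdef]
    exact le_trans (le_max_right 0 (-(l i))) (Finset.le_sup' (fun i => max 0 (-(l i))) (Finset.mem_univ i))
  have hnR : (0:ℝ) < (n:ℝ) := by exact_mod_cast hn
  rcases eq_or_lt_of_le hM0 with hM | hM
  · -- M = 0 case: all l i = 0
    have hli : ∀ i, l i = 0 := by
      have hnn : ∀ i ∈ Finset.univ, 0 ≤ l i := fun i _ => by
        have : max 0 (-(l i)) ≤ M := hMdef ▸ Finset.le_sup' (fun i => max 0 (-(l i))) (Finset.mem_univ i)
        rw [← hM] at this
        have := le_trans (le_max_right 0 (-(l i))) this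
        linarith
      have := (Finset.sum_eq_zero_iff_of_nonneg hnn).mp hl
      exact fun i => this i (Finset.mem_univ i)
    simp [hli, ← hM, gauge_zero]
  · -- M > 0
    have hnM : (0:ℝ) < (n:ℝ) * M := mul_pos hnR hM
    -- upper bound: x ∈ (n*M) • conv
    have hsum' : ∑ i, (l i + M) = (n:ℝ) * M := by
      rw [Finset.sum_add_distrib, hl, zero_add, Finset.sum_const, Finset.card_univ,
        Fintype.card_fin, nsmul_eq_mul]
    have hmem : (∑ i, l i • u i) ∈ (((n:ℝ) * M) • (convexHull ℝ (Set.range u)) : Set (Fin (n-1) → ℝ)) := by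
      rw [Set.mem_smul_set_iff_inv_smul_mem₀ hnM.ne']
      apply mem_convexHull_of_exists_fintype (fun i => (l i + M) / ((n:ℝ)*M)) u
      · intro i
        apply div_nonneg _ hnM.le
        have := hMl i; linarith
      · rw [← Finset.sum_div, hsum', div_self hnM.ne']
      · intro i
        exact Set.mem_range_self i
      · calc ∑ i, ((l i + M) / ((n:ℝ)*M)) • u i
            = ((n:ℝ)*M)⁻¹ • ∑ i, (l i + M) • u i := by
              rw [Finset.smul_sum]; congr 1; ext i
              rw [← smul_assoc, smul_eq_mul, div_eq_inv_mul]
          _ = ((n:ℝ)*M)⁻¹ • ∑ i, l i • u i := by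
              congr 1
              simp only [add_smul]
              rw [Finset.sum_add_distrib, ← Finset.smul_sum, hsum, smul_zero, add_zero]
    have hupper : gauge (convexHull ℝ (Set.range u)) (∑ i, l i • u i) ≤ (n:ℝ) * M :=
      gauge_le_of_mem hnM.le hmem
    -- lower bound
    have hlower : (n:ℝ) * M ≤ gauge (convexHull ℝ (Set.range u)) (∑ i, l i • u i) := by
      rw [gauge_def]
      refine le_csInf ⟨(n:ℝ)*M, Set.mem_Ioi.mpr hnM, hmem⟩ ?_
      rintro r ⟨hr, hxr⟩
      rw [Set.mem_Ioi] at hr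
      rw [Set.mem_smul_set_iff_inv_smul_mem₀ hr.ne'] at hxr
      obtain ⟨w, hw₀, hw₁, hwx⟩ := exists_weights u hxr
      have hrep : ∑ i, (r * w i) • u i = ∑ i, l i • u i := by
        calc ∑ i, (r * w i) • u i = r • ∑ i, w i • u i := by
              rw [Finset.smul_sum]; congr 1; ext i; rw [← smul_assoc, smul_eq_mul]
          _ = ∑ i, l i • u i := by rw [hwx, smul_inv_smul₀ hr.ne']
      have hker : ∑ i, (r * w i - l i) • u i = 0 := by
        simp only [sub_smul]
        rw [Finset.sum_sub_distrib, hrep, sub_self]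
      obtain ⟨c, hc⟩ := circuit_ker n hn u hspan hsum _ hker
      have hcsum : (n:ℝ) * c = r := by
        have h1 : ∑ i, (r * w i - l i) = r := by
          rw [Finset.sum_sub_distrib, hl, sub_zero, ← Finset.mul_sum, hw₁, mul_one]
        have h2 : ∑ i, (r * w i - l i) = (n:ℝ) * c := by
          simp only [fun i => hc i]
          rw [Finset.sum_const, Finset.card_univ, Fintype.card_fin, nsmul_eq_mul]
        linarith
      have hc' : c = r / (n:ℝ) := by rw [eq_div_iff hnR.ne', mul_comm]; exact hcsum
      have hMle : M ≤ r / (n:ℝ) := by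
        apply Finset.sup'_le
        intro i _
        apply max_le (div_nonneg hr.le hnR.le)
        have := hc i
        have hwi := mul_nonneg hr.le (hw₀ i)
        have : -(l i) = c - r * w i := by linarith
        rw [this, hc']
        linarith
      calc (n:ℝ) * M ≤ (n:ℝ) * (r / (n:ℝ)) := by
            apply mul_le_mul_of_nonneg_left hMle hnR.le
        _ = r := by field_simp
    linarith
end

section
/- Let u_1,...,u_n be a circuit in ℝ^{n-1}, Δ = conv{u_i}, ∇ = −Δ. For x = Σ λ_i u_i with Σ λ_i = 0, the Minkowski functional of Δ ∩ ∇ satisfies μ_{Δ∩∇}(x) = n · max_i |λ_i|. -/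
open Finset

/-- Membership in the convex hull of a finite family. -/
lemma mem_hull_iff_aux {n m : ℕ} (u : Fin n → (Fin m → ℝ)) (x : Fin m → ℝ) :
    x ∈ convexHull ℝ (Set.range u) ↔
      ∃ w : Fin n → ℝ, (∀ i, 0 ≤ w i) ∧ ∑ i, w i = 1 ∧ ∑ i, w i • u i = x := by
  constructor
  · intro hx
    rw [convexHull_range_eq_exists_affineCombination] at hx
    obtain ⟨s, w, hw0, hw1, hx⟩ := hx
    refine ⟨fun i => if i ∈ s then w i else 0, fun i => ?_, ?_, ?_⟩
    · dsimp only
      split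
      · exact hw0 i ‹_›
      · exact le_refl _
    · rw [Finset.sum_ite_mem, Finset.univ_inter, hw1]
    · rw [Finset.affineCombination_eq_linear_combination s u w hw1] at hx
      rw [← hx]
      simp only [ite_smul, zero_smul]
      rw [Finset.sum_ite_mem, Finset.univ_inter]
  · rintro ⟨w, hw0, hw1, hx⟩
    exact mem_convexHull_of_exists_fintype w u hw0 hw1 (fun i => Set.mem_range_self i) hx

/-- Uniqueness: the only dependency with coefficient sum zero is trivial. -/
lemma circuit_ker_aux {n : ℕ} (hn : 0 < n) (u : Fin n → (Fin (n-1) → ℝ))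
    (hspan : Submodule.span ℝ (Set.range u) = ⊤)
    (hsum : ∑ i, u i = 0)
    (d : Fin n → ℝ) (hd : ∑ i, d i • u i = 0) (hds : ∑ i, d i = 0) : d = 0 := by
  set φ : (Fin n → ℝ) →ₗ[ℝ] (Fin (n-1) → ℝ) := Fintype.linearCombination ℝ u with hφ
  have hrange : LinearMap.range φ = ⊤ := by
    rw [hφ, Fintype.range_linearCombination, hspan]
  have hrank := LinearMap.finrank_range_add_finrank_ker φ
  rw [hrange, finrank_top, Module.finrank_pi, Module.finrank_pi, Fintype.card_fin,
    Fintype.card_fin] at hrank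
  have hker1 : Module.finrank ℝ (LinearMap.ker φ) = 1 := by omega
  have hones : (fun _ => (1:ℝ) : Fin n → ℝ) ∈ LinearMap.ker φ := by
    simp only [LinearMap.mem_ker, hφ, Fintype.linearCombination_apply, one_smul]
    exact hsum
  have honesne : (fun _ => (1:ℝ) : Fin n → ℝ) ≠ 0 := by
    intro h
    have := congrFun h ⟨0, hn⟩
    simp at this
  have hle : (ℝ ∙ (fun _ => (1:ℝ) : Fin n → ℝ)) ≤ LinearMap.ker φ := by
    rw [Submodule.span_singleton_le_iff_mem]; exact hones
  have hkereq : (ℝ ∙ (fun _ => (1:ℝ) : Fin n → ℝ)) = LinearMap.ker φ :=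
    Submodule.eq_of_le_of_finrank_eq hle (by rw [finrank_span_singleton honesne, hker1])
  have hdmem : d ∈ LinearMap.ker φ := by
    simp only [LinearMap.mem_ker, hφ, Fintype.linearCombination_apply]
    exact hd
  rw [← hkereq, Submodule.mem_span_singleton] at hdmem
  obtain ⟨c, hc⟩ := hdmem
  have hsum' : ∑ i, d i = c * n := by
    rw [← hc]
    simp [Finset.sum_const, mul_comm]
  rw [hds] at hsum'
  have hc0 : c = 0 := by
    rcases mul_eq_zero.mp hsum'.symm with h | h
    · exact h
    · exact absurd h (by positivity)
  rw [← hc, hc0, zero_smul]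

/-- Representation formula: coefficients of a representation with sum `r`. -/
lemma circuit_rep_aux {n : ℕ} (hn : 0 < n) (u : Fin n → (Fin (n-1) → ℝ))
    (hspan : Submodule.span ℝ (Set.range u) = ⊤)
    (hsum : ∑ i, u i = 0)
    (l : Fin n → ℝ) (hl : ∑ i, l i = 0)
    (d : Fin n → ℝ) (r : ℝ) (hdr : ∑ i, d i = r)
    (hd : ∑ i, d i • u i = ∑ i, l i • u i) (i : Fin n) :
    d i = l i + r / n := by
  have hn' : (n : ℝ) ≠ 0 := Nat.cast_ne_zero.mpr hn.ne'
  have key : (fun i => d i - l i - r / n) = 0 := by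
    apply circuit_ker_aux hn u hspan hsum
    · have h : ∑ i, (d i - l i - r / n) • u i
          = (∑ i, d i • u i) - (∑ i, l i • u i) - (r / n) • ∑ i, u i := by
        rw [Finset.smul_sum, ← Finset.sum_sub_distrib, ← Finset.sum_sub_distrib]
        refine Finset.sum_congr rfl fun j _ => ?_
        rw [sub_smul, sub_smul]
      rw [h, hd, sub_self, hsum, smul_zero, zero_sub, neg_zero]
    · rw [Finset.sum_sub_distrib, Finset.sum_sub_distrib, hdr, hl, sub_zero,
        Finset.sum_const, Finset.card_univ, Fintype.card_fin, nsmul_eq_mul]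
      field_simp
      ring
  have := congrFun key i
  simp only [Pi.zero_apply] at this
  linarith

/-- Sum manipulation for the scaled weights. -/
lemma weight_sum_aux {n m : ℕ} (u : Fin n → (Fin m → ℝ)) (hsum : ∑ i, u i = 0)
    (g : Fin n → ℝ) (r : ℝ) :
    ∑ i, (g i / r + 1 / n) • u i = r⁻¹ • ∑ i, g i • u i := by
  have h : ∑ i, (g i / r + 1 / n) • u i
      = r⁻¹ • (∑ i, g i • u i) + ((1:ℝ)/n) • ∑ i, u i := by
    rw [Finset.smul_sum, Finset.smul_sum, ← Finset.sum_add_distrib]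
    refine Finset.sum_congr rfl fun i _ => ?_
    rw [add_smul, smul_smul, div_eq_inv_mul]
  rw [h, hsum, smul_zero, add_zero]

theorem gauge_inter_simplex_neg_eq (n : ℕ) (hn : 0 < n) (u : Fin n → (Fin (n-1) → ℝ))
    (hspan : Submodule.span ℝ (Set.range u) = ⊤)
    (hsum : ∑ i, u i = 0)
    (l : Fin n → ℝ) (hl : ∑ i, l i = 0) :
    gauge (convexHull ℝ (Set.range u) ∩ -convexHull ℝ (Set.range u)) (∑ i, l i • u i)
      = n * (Finset.univ.sup'
          (Finset.univ_nonempty_iff.mpr (Fin.pos_iff_nonempty.mp hn))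
          (fun i => |l i|)) := by
  have hne : (Finset.univ : Finset (Fin n)).Nonempty :=
    Finset.univ_nonempty_iff.mpr (Fin.pos_iff_nonempty.mp hn)
  set M := Finset.univ.sup' hne (fun i => |l i|) with hM
  have hMle : ∀ i, |l i| ≤ M := fun i => by
    rw [hM]; exact Finset.le_sup' (fun j => |l j|) (Finset.mem_univ i)
  have hM0 : 0 ≤ M := le_trans (abs_nonneg _) (hMle hne.choose)
  have hn' : (0:ℝ) < n := by exact_mod_cast hn
  rcases eq_or_lt_of_le hM0 with hM0' | hMpos
  · -- M = 0 : all l i = 0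
    have hli : ∀ i, l i = 0 := fun i =>
      abs_eq_zero.mp (le_antisymm (hM0' ▸ hMle i) (abs_nonneg _))
    have hx : (∑ i, l i • u i) = 0 := by simp [hli]
    rw [hx, gauge_zero, ← hM0', mul_zero]
  · -- M > 0
    have hset : {r ∈ Set.Ioi (0:ℝ) |
        r⁻¹ • (∑ i, l i • u i) ∈
          convexHull ℝ (Set.range u) ∩ -convexHull ℝ (Set.range u)} = Set.Ici (n * M) := by
      ext r
      simp only [Set.mem_setOf_eq, Set.mem_Ioi, Set.mem_Ici, Set.mem_inter_iff]
      constructor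
      · rintro ⟨hr, hmem, hmemneg⟩
        rw [mem_hull_iff_aux] at hmem
        obtain ⟨w, hw0, hw1, hwx⟩ := hmem
        rw [Set.mem_neg, mem_hull_iff_aux] at hmemneg
        obtain ⟨v, hv0, hv1, hvx⟩ := hmemneg
        have hrw : ∑ i, (r * w i) • u i = ∑ i, l i • u i := by
          have := congrArg (fun y => r • y) hwx
          simpa [Finset.smul_sum, smul_smul, mul_inv_cancel_left₀ hr.ne'] using this
        have hrv : ∑ i, (r * v i) • u i = ∑ i, (-l i) • u i := by
          have := congrArg (fun y => r • y) hvx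
          simp only [Finset.smul_sum, smul_smul, smul_neg] at this
          rw [this, ← Finset.sum_neg_distrib]
          refine Finset.sum_congr rfl fun j _ => ?_
          rw [mul_inv_cancel_left₀ hr.ne', neg_smul]
        have h1 : ∀ i, r * w i = l i + r / n := fun i =>
          circuit_rep_aux hn u hspan hsum l hl _ r
            (by rw [← Finset.mul_sum, hw1, mul_one]) hrw i
        have h2 : ∀ i, r * v i = -l i + r / n := fun i =>
          circuit_rep_aux hn u hspan hsum (fun j => -l j) (by simp [hl]) _ r
            (by rw [← Finset.mul_sum, hv1, mul_one]) hrv i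
        have hb : ∀ i, |l i| ≤ r / n := by
          intro i
          rw [abs_le]
          constructor
          · have := h1 i; nlinarith [hw0 i]
          · have := h2 i; nlinarith [hv0 i]
        have hMb : M ≤ r / n := Finset.sup'_le _ _ fun i _ => hb i
        calc (n:ℝ) * M ≤ n * (r / n) := by nlinarith
          _ = r := by field_simp
      · intro hr
        have hrpos : 0 < r := lt_of_lt_of_le (by positivity) hr
        have hMrn : M ≤ r / n := by
          rw [le_div_iff₀ hn']
          linarith [hr]
        have hnonneg : ∀ g : Fin n → ℝ, ∀ i, |g i| ≤ M →
            (0:ℝ) ≤ g i / r + 1 / n := by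
          intro g i hgi
          have h1 : -(r/n) ≤ g i := by
            have := (abs_le.mp (hgi.trans hMrn)).1
            linarith
          have hgn : -r ≤ g i * n := by
            have h2 := mul_le_mul_of_nonneg_right h1 (le_of_lt hn')
            have h3 : -(r/n) * n = -r := by field_simp
            linarith
          rw [div_add_div _ _ hrpos.ne' (ne_of_gt hn'), le_div_iff₀ (mul_pos hrpos hn')]
          nlinarith
        refine ⟨hrpos, ?_, ?_⟩
        · rw [mem_hull_iff_aux]
          refine ⟨fun i => l i / r + 1 / n, fun i => hnonneg l i (hMle i), ?_, ?_⟩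
          · rw [Finset.sum_add_distrib, ← Finset.sum_div, hl, zero_div, zero_add,
              Finset.sum_const, Finset.card_univ, Fintype.card_fin, nsmul_eq_mul]
            field_simp
          · exact weight_sum_aux u hsum l r
        · rw [Set.mem_neg, mem_hull_iff_aux]
          refine ⟨fun i => (-l i) / r + 1 / n, fun i => hnonneg (fun j => -l j) i (by simpa using hMle i), ?_, ?_⟩
          · rw [Finset.sum_add_distrib, ← Finset.sum_div, Finset.sum_neg_distrib, hl,
              neg_zero, zero_div, zero_add,
              Finset.sum_const, Finset.card_univ, Fintype.card_fin, nsmul_eq_mul]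
            field_simp
          · rw [weight_sum_aux u hsum (fun j => -l j) r]
            simp [neg_smul, Finset.sum_neg_distrib, smul_neg]
    rw [gauge_def', hset]
    exact csInf_Ici
end

section
/- Let u_1,...,u_n be a circuit in ℝ^{n-1} with Δ = conv{u_i} and ∇ = −Δ. Then Δ ∩ ∇ = { Σ λ_i u_i : Σ λ_i = 0 and |λ_i| ≤ 1/n for all i }. -/
open Finset

/-- Membership in the convex hull of the range of a fintype-indexed family. -/
lemma mem_convexHull_range_iff {ι : Type*} [Fintype ι] {E : Type*} [AddCommGroup E]
    [Module ℝ E] (v : ι → E) (x : E) :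
    x ∈ convexHull ℝ (Set.range v) ↔
      ∃ w : ι → ℝ, (∀ i, 0 ≤ w i) ∧ ∑ i, w i = 1 ∧ x = ∑ i, w i • v i := by
  constructor
  · intro hx
    rw [convexHull_range_eq_exists_affineCombination] at hx
    obtain ⟨s, w, hw₀, hw₁, hx⟩ := hx
    classical
    refine ⟨fun i => if i ∈ s then w i else 0, ?_, ?_, ?_⟩
    · intro i
      by_cases h : i ∈ s <;> simp [h, hw₀ i]
    · rw [Finset.sum_ite_mem, Finset.univ_inter, hw₁]
    · rw [← hx, affineCombination_eq_linear_combination s v w hw₁]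
      simp only [ite_smul, zero_smul]
      rw [Finset.sum_ite_mem, Finset.univ_inter]
  · rintro ⟨w, hw₀, hw₁, rfl⟩
    have := affineCombination_mem_convexHull (s := Finset.univ) (v := v) (w := w)
      (fun i _ => hw₀ i) hw₁
    rwa [affineCombination_eq_linear_combination _ v w hw₁] at this

theorem simplex_inter_neg_eq (n : ℕ) (hn : 0 < n) (u : Fin n → (Fin (n-1) → ℝ))
    (hspan : Submodule.span ℝ (Set.range u) = ⊤)
    (hsum : ∑ i, u i = 0) :
    convexHull ℝ (Set.range u) ∩ -convexHull ℝ (Set.range u)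
      = {x | ∃ l : Fin n → ℝ, ∑ i, l i = 0 ∧ (∀ i, |l i| ≤ 1 / n) ∧ x = ∑ i, l i • u i} := by
  classical
  have hn' : (n : ℝ) ≠ 0 := Nat.cast_ne_zero.mpr hn.ne'
  have hcard : ∑ _i : Fin n, (1/n : ℝ) = 1 := by
    rw [Finset.sum_const, Finset.card_univ, Fintype.card_fin, nsmul_eq_mul, mul_one_div,
      div_self hn']
  set T := Fintype.linearCombination ℝ u with hT
  have hTapp : ∀ f : Fin n → ℝ, T f = ∑ i, f i • u i := fun f => rfl
  have hone : T (fun _ => (1:ℝ)) = 0 := by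
    rw [hTapp]; simpa using hsum
  have honemem : (fun _ => (1:ℝ)) ∈ LinearMap.ker T := hone
  have hone_ne : (fun _ => (1:ℝ)) ≠ (0 : Fin n → ℝ) := by
    intro h
    have := congrFun h ⟨0, hn⟩
    norm_num at this
  have hrange : LinearMap.range T = ⊤ := by
    rw [hT, Fintype.range_linearCombination, hspan]
  have hker : Module.finrank ℝ (LinearMap.ker T) = 1 := by
    have hrn := LinearMap.finrank_range_add_finrank_ker T
    rw [hrange] at hrn
    have h1 : Module.finrank ℝ (⊤ : Submodule ℝ (Fin (n-1) → ℝ)) = n - 1 := by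
      simp [finrank_top]
    have h2 : Module.finrank ℝ (Fin n → ℝ) = n := by simp
    omega
  have hkerspan : LinearMap.ker T = Submodule.span ℝ {(fun _ => (1:ℝ))} := by
    refine (Submodule.eq_of_le_of_finrank_le
      ((Submodule.span_singleton_le_iff_mem _ _).mpr honemem) ?_).symm
    rw [hker, finrank_span_singleton hone_ne]
  have huniq : ∀ l m : Fin n → ℝ, ∑ i, l i = 0 → ∑ i, m i = 0 →
      ∑ i, l i • u i = ∑ i, m i • u i → l = m := by
    intro l m hl hm heq
    have hd : (l - m) ∈ LinearMap.ker T := by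
      rw [LinearMap.mem_ker, map_sub, hTapp, hTapp, heq, sub_self]
    rw [hkerspan, Submodule.mem_span_singleton] at hd
    obtain ⟨t, ht⟩ := hd
    have hsumd : ∑ i, (l - m) i = 0 := by
      simp only [Pi.sub_apply, Finset.sum_sub_distrib, hl, hm, sub_zero]
    have htn : t * n = 0 := by
      rw [← ht] at hsumd
      simpa [mul_comm] using hsumd
    have ht0 : t = 0 := by
      rcases mul_eq_zero.mp htn with h | h
      · exact h
      · exact absurd h hn'
    have : l - m = 0 := by rw [← ht, ht0, zero_smul]
    exact sub_eq_zero.mp this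
  ext x
  simp only [Set.mem_inter_iff, Set.mem_neg, Set.mem_setOf_eq,
    mem_convexHull_range_iff]
  constructor
  · rintro ⟨⟨c, hc₀, hc₁, hxc⟩, ⟨d, hd₀, hd₁, hxd⟩⟩
    have hlsum : ∑ i, (c i - 1/(n:ℝ)) = 0 := by
      rw [Finset.sum_sub_distrib, hc₁, hcard, sub_self]
    have hmsum : ∑ i, (1/(n:ℝ) - d i) = 0 := by
      rw [Finset.sum_sub_distrib, hd₁, hcard, sub_self]
    have hlx : ∑ i, (c i - 1/(n:ℝ)) • u i = x := by
      simp only [sub_smul, Finset.sum_sub_distrib, ← hxc]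
      rw [← Finset.smul_sum, hsum, smul_zero, sub_zero]
    have hmx : ∑ i, (1/(n:ℝ) - d i) • u i = x := by
      simp only [sub_smul, Finset.sum_sub_distrib, ← hxd]
      rw [← Finset.smul_sum, hsum, smul_zero, zero_sub, neg_neg]
    have hlm : (fun i => c i - 1/(n:ℝ)) = (fun i => 1/(n:ℝ) - d i) :=
      huniq _ _ hlsum hmsum (by rw [hlx, hmx])
    refine ⟨fun i => c i - 1/(n:ℝ), hlsum, fun i => ?_, hlx.symm⟩
    rw [abs_le]
    constructor
    · have := hc₀ i
      linarith
    · have := hd₀ i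
      have := congrFun hlm i
      linarith
  · rintro ⟨l, hlsum, hlb, rfl⟩
    have hbound : ∀ i, -(1/n : ℝ) ≤ l i ∧ l i ≤ 1/n := fun i => abs_le.mp (hlb i)
    constructor
    · refine ⟨fun i => l i + 1/n, fun i => by linarith [(hbound i).1], ?_, ?_⟩
      · rw [Finset.sum_add_distrib, hlsum, zero_add, hcard]
      · simp only [add_smul, Finset.sum_add_distrib]
        rw [← Finset.smul_sum, hsum, smul_zero, add_zero]
    · refine ⟨fun i => 1/n - l i, fun i => by linarith [(hbound i).2], ?_, ?_⟩
      · rw [Finset.sum_sub_distrib, hlsum, sub_zero, hcard]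
      · simp only [sub_smul, Finset.sum_sub_distrib]
        rw [← Finset.smul_sum, hsum, smul_zero, zero_sub]
end

section
/- For n = 2k, the polytope Δ ∩ ∇ (for a circuit u_1,...,u_n in ℝ^{n-1}, Δ = conv{u_i}, ∇ = −Δ) is affinely isomorphic to the hypersimplex Δ_{2k,k}, defined as the intersection of the cube [0,1]^{2k} with the hyperplane x_1 + ... + x_{2k} = k. -/
open Finset

lemma mem_convexHull_range_iff_aux {n : ℕ} {E : Type*} [AddCommGroup E] [Module ℝ E]
    {v : Fin n → E} {x : E} :
    x ∈ convexHull ℝ (Set.range v) ↔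
      ∃ w : Fin n → ℝ, (∀ i, 0 ≤ w i) ∧ ∑ i, w i = 1 ∧ ∑ i, w i • v i = x := by
  classical
  constructor
  · intro hx
    rw [convexHull_range_eq_exists_affineCombination] at hx
    obtain ⟨s, w, hw0, hw1, hx⟩ := hx
    refine ⟨fun i => if i ∈ s then w i else 0, ?_, ?_, ?_⟩
    · intro i
      by_cases hi : i ∈ s <;> simp [hi, hw0 i]
    · simp only [Finset.sum_ite_mem, Finset.univ_inter]
      exact hw1
    · rw [← hx, affineCombination_eq_linear_combination s v w hw1]
      rw [← Finset.sum_subset (Finset.subset_univ s)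
        (by intro i _ hi; simp [hi])]
      exact Finset.sum_congr rfl fun i hi => by simp [hi]
  · rintro ⟨w, h0, h1, hx⟩
    exact mem_convexHull_of_exists_fintype w v h0 h1 (fun i => Set.mem_range_self i) hx

theorem simplex_inter_neg_affine_iso_hypersimplex (k : ℕ) (hk : 1 ≤ k)
    (u : Fin (2*k) → (Fin (2*k-1) → ℝ))
    (hspan : Submodule.span ℝ (Set.range u) = ⊤)
    (hsum : ∑ i, u i = 0) :
    ∃ f : (Fin (2*k-1) → ℝ) →ᵃ[ℝ] (Fin (2*k) → ℝ),
      Function.Injective f ∧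
      f '' (convexHull ℝ (Set.range u) ∩ -convexHull ℝ (Set.range u))
        = {x : Fin (2*k) → ℝ | (∀ i, x i ∈ Set.Icc (0:ℝ) 1) ∧ ∑ i, x i = (k : ℝ)} := by
  classical
  have hkR : (k : ℝ) ≠ 0 := by
    exact_mod_cast Nat.one_le_iff_ne_zero.mp hk
  have hkpos : (0 : ℝ) < (k : ℝ) := by
    have : (0:ℕ) < k := hk
    exact_mod_cast this
  -- the linear map sending coefficients to linear combinations
  set φ : (Fin (2*k) → ℝ) →ₗ[ℝ] (Fin (2*k-1) → ℝ) := Fintype.linearCombination ℝ u with hφdef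
  have hφ : ∀ c : Fin (2*k) → ℝ, φ c = ∑ i, c i • u i := fun c => by
    rw [hφdef]; simp [Fintype.linearCombination_apply]
  have hrange : LinearMap.range φ = ⊤ := by
    rw [hφdef, Fintype.range_linearCombination, hspan]
  -- the all-ones vector
  set e : Fin (2*k) → ℝ := fun _ => (1:ℝ) with he
  have hone : φ e = 0 := by
    rw [hφ]
    simpa [he] using hsum
  have hene : e ≠ 0 := by
    intro h
    have := congrFun h ⟨0, by omega⟩
    simp [he] at this
  -- kernel of φ is the span of e
  have hkerspan : Submodule.span ℝ {e} = LinearMap.ker φ := by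
    have hle : Submodule.span ℝ {e} ≤ LinearMap.ker φ := by
      rw [Submodule.span_singleton_le_iff_mem, LinearMap.mem_ker]
      exact hone
    have h1 : Module.finrank ℝ (Submodule.span ℝ {e}) = 1 :=
      finrank_span_singleton hene
    have h2 : Module.finrank ℝ (LinearMap.ker φ) = 1 := by
      have hrn := LinearMap.finrank_range_add_finrank_ker φ
      rw [hrange] at hrn
      rw [finrank_top] at hrn
      rw [Module.finrank_fin_fun, Module.finrank_fin_fun] at hrn
      omega
    exact Submodule.eq_of_le_of_finrank_eq hle (by rw [h1, h2])
  have hker : ∀ c : Fin (2*k) → ℝ, φ c = 0 → ∃ t : ℝ, c = fun _ => t := by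
    intro c hc
    have : c ∈ Submodule.span ℝ {e} := by rw [hkerspan]; exact hc
    obtain ⟨t, ht⟩ := Submodule.mem_span_singleton.mp this
    exact ⟨t, by rw [← ht]; funext i; simp [he]⟩
  have h2k : ((2*k : ℕ) : ℝ) ≠ 0 := by
    have : 0 < 2*k := by omega
    exact_mod_cast Nat.pos_iff_ne_zero.mp this
  have hsum_const : ∀ t : ℝ, ∑ _i : Fin (2*k), t = (2*(k:ℝ)) * t := by
    intro t
    rw [Finset.sum_const, Finset.card_univ, Fintype.card_fin]
    push_cast
    ring
  -- uniqueness of coefficients with given sum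
  have hunique : ∀ c c' : Fin (2*k) → ℝ, φ c = φ c' → ∑ i, c i = ∑ i, c' i →
      c = c' := by
    intro c c' hφe hS
    have : φ (c - c') = 0 := by rw [map_sub, hφe, sub_self]
    obtain ⟨t, ht⟩ := hker _ this
    have hst : ∑ i, (c - c') i = 2*(k:ℝ) * t := by rw [ht]; exact hsum_const t
    have h0 : ∑ i, (c - c') i = 0 := by
      simp only [Pi.sub_apply, Finset.sum_sub_distrib, hS, sub_self]
    have ht0 : t = 0 := by
      rw [h0] at hst
      have h2kR : (2*(k:ℝ)) ≠ 0 := by positivity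
      field_simp at hst
      exact (mul_eq_zero.mp hst.symm).resolve_left h2kR
    have : c - c' = 0 := by rw [ht, ht0]; funext i; simp
    exact sub_eq_zero.mp this
  -- a linear section of φ
  obtain ⟨s, hs⟩ := φ.exists_rightInverse_of_surjective hrange
  have hφs : ∀ x, φ (s x) = x := by
    intro x
    have := LinearMap.ext_iff.mp hs x
    simpa using this
  -- the sum functional
  set σ : (Fin (2*k) → ℝ) →ₗ[ℝ] ℝ := ∑ i, LinearMap.proj i with hσdef
  have hσ : ∀ c : Fin (2*k) → ℝ, σ c = ∑ i, c i := by
    intro c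
    rw [hσdef]
    simp [LinearMap.proj_apply]
  -- the affine map
  set T : (Fin (2*k) → ℝ) →ₗ[ℝ] (Fin (2*k) → ℝ) :=
    (k:ℝ) • LinearMap.id - LinearMap.smulRight ((1/2 : ℝ) • σ) e with hTdef
  set L : (Fin (2*k-1) → ℝ) →ₗ[ℝ] (Fin (2*k) → ℝ) := T.comp s with hLdef
  set c0 : Fin (2*k) → ℝ := fun _ => (1/2 : ℝ) with hc0
  set F : (Fin (2*k-1) → ℝ) →ᵃ[ℝ] (Fin (2*k) → ℝ) :=
    AffineMap.mk' (fun x => L x + c0) L 0 (by intro p; simp) with hFdef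
  have hFapp : ∀ x, F x = L x + c0 := fun x => rfl
  -- the canonical coefficients of x
  set lam : (Fin (2*k-1) → ℝ) → (Fin (2*k) → ℝ) :=
    fun x i => s x i + (1 - ∑ j, s x j) / (2*(k:ℝ)) with hlam
  have hFlam : ∀ x, F x = (k:ℝ) • lam x := by
    intro x
    funext i
    rw [hFapp]
    simp only [hlam, Pi.add_apply, Pi.smul_apply, smul_eq_mul, hLdef, LinearMap.comp_apply,
      hTdef, LinearMap.sub_apply, LinearMap.smul_apply, LinearMap.id_apply,
      LinearMap.smulRight_apply, hσ, hc0, he]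
    field_simp
    simp only [Pi.sub_apply, Pi.smul_apply, smul_eq_mul]
    ring
  have hφlam : ∀ x, φ (lam x) = x := by
    intro x
    have hrw : lam x = s x + ((1 - ∑ j, s x j) / (2*(k:ℝ))) • e := by
      funext i
      simp [hlam, he, smul_eq_mul]
    rw [hrw, map_add, map_smul, hφs, hone, smul_zero, add_zero]
  have hSlam : ∀ x, ∑ i, lam x i = 1 := by
    intro x
    simp only [hlam]
    rw [Finset.sum_add_distrib]
    rw [hsum_const]
    have h2kR : (2*(k:ℝ)) ≠ 0 := by positivity
    field_simp
    ring
  refine ⟨F, ?_, ?_⟩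
  · -- injectivity
    intro a b hab
    have hl : lam a = lam b := by
      have := hab
      rw [hFlam, hFlam] at this
      exact smul_right_injective _ hkR this
    calc a = φ (lam a) := (hφlam a).symm
    _ = φ (lam b) := by rw [hl]
    _ = b := hφlam b
  · -- image equality
    ext y
    constructor
    · rintro ⟨x, ⟨hxΔ, hxN⟩, rfl⟩
      rw [Set.mem_neg] at hxN
      obtain ⟨w, hw0, hw1, hwx⟩ := mem_convexHull_range_iff_aux.mp hxΔ
      obtain ⟨v, hv0, hv1, hvx⟩ := mem_convexHull_range_iff_aux.mp hxN
      have hφw : φ w = x := by rw [hφ]; exact hwx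
      have hφv : φ v = -x := by rw [hφ]; exact hvx
      have hwv : ∀ i, w i + v i = 1/(k:ℝ) := by
        have h0 : φ (w + v) = 0 := by rw [map_add, hφw, hφv, add_neg_cancel]
        obtain ⟨t, ht⟩ := hker _ h0
        have hst : ∑ i, (w + v) i = 2*(k:ℝ) * t := by rw [ht]; exact hsum_const t
        have h2 : ∑ i, (w + v) i = 2 := by
          simp only [Pi.add_apply, Finset.sum_add_distrib, hw1, hv1]
          norm_num
        have ht' : t = 1/(k:ℝ) := by
          rw [h2] at hst
          field_simp at hst ⊢
          linarith
        intro i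
        have := congrFun ht i
        simp only [Pi.add_apply] at this
        rw [this, ht']
      have hlw : lam x = w := hunique _ _ (by rw [hφlam, hφw]) (by rw [hSlam, hw1])
      have hF : F x = (k:ℝ) • w := by rw [hFlam, hlw]
      constructor
      · intro i
        rw [hF]
        constructor
        · exact mul_nonneg (le_of_lt hkpos) (hw0 i)
        · have hwle : w i ≤ 1/(k:ℝ) := by
            have := hwv i
            have := hv0 i
            linarith
          calc (k:ℝ) * w i ≤ (k:ℝ) * (1/(k:ℝ)) :=
                mul_le_mul_of_nonneg_left hwle (le_of_lt hkpos)
          _ = 1 := by field_simp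
      · rw [hF]
        simp only [Pi.smul_apply, smul_eq_mul, ← Finset.mul_sum, hw1, mul_one]
    · rintro ⟨hy1, hy2⟩
      set w : Fin (2*k) → ℝ := fun i => y i / (k:ℝ) with hw
      have hw0 : ∀ i, 0 ≤ w i := fun i =>
        div_nonneg (hy1 i).1 (le_of_lt hkpos)
      have hw1 : ∑ i, w i = 1 := by
        simp only [hw, ← Finset.sum_div, hy2]
        field_simp
      have hwle : ∀ i, w i ≤ 1/(k:ℝ) := by
        intro i
        rw [hw]
        exact (div_le_div_iff_of_pos_right hkpos).mpr (hy1 i).2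
      set x : Fin (2*k-1) → ℝ := φ w with hx
      have hxΔ : x ∈ convexHull ℝ (Set.range u) :=
        mem_convexHull_range_iff_aux.mpr ⟨w, hw0, hw1, (hφ w).symm⟩
      have hxN : x ∈ -convexHull ℝ (Set.range u) := by
        rw [Set.mem_neg]
        refine mem_convexHull_range_iff_aux.mpr ⟨fun i => 1/(k:ℝ) - w i, ?_, ?_, ?_⟩
        · intro i
          have := hwle i
          linarith
        · rw [Finset.sum_sub_distrib, hw1, hsum_const]
          field_simp
          norm_num
        · have : ∑ i, (1/(k:ℝ) - w i) • u i
              = (1/(k:ℝ)) • (∑ i, u i) - ∑ i, w i • u i := by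
            rw [Finset.smul_sum, ← Finset.sum_sub_distrib]
            exact Finset.sum_congr rfl fun i _ => by rw [sub_smul]
          rw [this, hsum, smul_zero, zero_sub, ← hφ, ← hx]
      refine ⟨x, ⟨hxΔ, hxN⟩, ?_⟩
      have hlw : lam x = w := hunique _ _ (by rw [hφlam, hx]) (by rw [hSlam, hw1])
      rw [hFlam, hlw]
      funext i
      simp only [Pi.smul_apply, smul_eq_mul, hw]
      field_simp
end

section
/- Let K ⊊ 2^[n] be a simplicial complex with ∅ ∈ K, and let τ = (X, Y) be a ridge of Bier(K), i.e., X ∈ K, Y ∉ K, X ⊆ Y, |Y \ X| = 2, say Y = X ∪ {c_1, c_2}. Then τ is contained in exactly two facets of Bier(K): if both X∪{c_1} and X∪{c_2} are in K the two facets are (X∪{c_1}, Y) and (X∪{c_2}, Y); if neither is in K the two facets are (X, X∪{c_1}) and (X, X∪{c_2}); if exactly one, say X∪{c_1} ∈ K, the two facets are (X∪{c_1}, Y) and (X, X∪{c_2}). -/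
/-- The facets of `Bier(K)` (in interval notation) containing the face `(X, Y)`. -/
def facetsContaining {n : ℕ} (K : Set (Finset (Fin n))) (X Y : Finset (Fin n)) :
    Set (Finset (Fin n) × Finset (Fin n)) :=
  {p | p.1 ∈ K ∧ p.2 ∉ K ∧ p.1 ⊆ p.2 ∧ (p.2 \ p.1).card = 1 ∧ X ⊆ p.1 ∧ p.2 ⊆ Y}

lemma between_aux {n : ℕ} {X A : Finset (Fin n)} {c₁ c₂ : Fin n}
    (h1 : X ⊆ A) (h2 : A ⊆ insert c₁ (insert c₂ X)) :
    A = X ∨ A = insert c₁ X ∨ A = insert c₂ X ∨ A = insert c₁ (insert c₂ X) := by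
  by_cases m₁ : c₁ ∈ A <;> by_cases m₂ : c₂ ∈ A
  · right; right; right
    apply Finset.Subset.antisymm h2
    intro x hx
    simp only [Finset.mem_insert] at hx
    rcases hx with rfl | rfl | hx
    · exact m₁
    · exact m₂
    · exact h1 hx
  · right; left
    apply Finset.Subset.antisymm
    · intro x hx
      have := h2 hx
      simp only [Finset.mem_insert] at this ⊢
      rcases this with rfl | rfl | hxX
      · exact Or.inl rfl
      · exact absurd hx m₂
      · exact Or.inr hxX
    · exact Finset.insert_subset m₁ h1
  · right; right; left
    apply Finset.Subset.antisymm
    · intro x hx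
      have := h2 hx
      simp only [Finset.mem_insert] at this ⊢
      rcases this with rfl | rfl | hxX
      · exact absurd hx m₁
      · exact Or.inl rfl
      · exact Or.inr hxX
    · exact Finset.insert_subset m₂ h1
  · left
    apply Finset.Subset.antisymm
    · intro x hx
      have := h2 hx
      simp only [Finset.mem_insert] at this
      rcases this with rfl | rfl | hxX
      · exact absurd hx m₁
      · exact absurd hx m₂
      · exact hxX
    · exact h1

theorem ridge_in_exactly_two_facets (n : ℕ) (K : Set (Finset (Fin n)))
    (hK : ∀ s ∈ K, ∀ t ⊆ s, t ∈ K) (h0 : ∅ ∈ K)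
    (hu : (Finset.univ : Finset (Fin n)) ∉ K)
    (X Y : Finset (Fin n)) (hX : X ∈ K) (hY : Y ∉ K) (hXY : X ⊆ Y)
    (c₁ c₂ : Fin n) (hc : c₁ ≠ c₂) (hc₁ : c₁ ∉ X) (hc₂ : c₂ ∉ X)
    (hYeq : Y = insert c₁ (insert c₂ X)) :
    (insert c₁ X ∈ K → insert c₂ X ∈ K →
        facetsContaining K X Y = {(insert c₁ X, Y), (insert c₂ X, Y)}) ∧
    (insert c₁ X ∉ K → insert c₂ X ∉ K →
        facetsContaining K X Y = {(X, insert c₁ X), (X, insert c₂ X)}) ∧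
    (insert c₁ X ∈ K → insert c₂ X ∉ K →
        facetsContaining K X Y = {(insert c₁ X, Y), (X, insert c₂ X)}) := by
  have hc₁' : c₁ ∉ insert c₂ X := by simp [hc, hc₁]
  have hc₂' : c₂ ∉ insert c₁ X := by simp [Ne.symm hc, hc₂]
  have hcY : Y.card = X.card + 2 := by
    rw [hYeq, Finset.card_insert_of_notMem hc₁', Finset.card_insert_of_notMem hc₂]
  have hc1c : (insert c₁ X).card = X.card + 1 := Finset.card_insert_of_notMem hc₁
  have hc2c : (insert c₂ X).card = X.card + 1 := Finset.card_insert_of_notMem hc₂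
  have hsub1 : insert c₁ X ⊆ Y := by
    rw [hYeq]; exact Finset.insert_subset_insert _ (Finset.subset_insert _ _)
  have hsub2 : insert c₂ X ⊆ Y := by
    rw [hYeq]; intro x hx; simp only [Finset.mem_insert] at hx ⊢; tauto
  have hns1 : ¬ (insert c₁ X ⊆ insert c₂ X) := fun h =>
    hc₁' (h (Finset.mem_insert_self _ _))
  have hns2 : ¬ (insert c₂ X ⊆ insert c₁ X) := fun h =>
    hc₂' (h (Finset.mem_insert_self _ _))
  have hd1 : (Y \ insert c₁ X).card = 1 := by
    rw [Finset.card_sdiff_of_subset hsub1, hcY, hc1c]; omega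
  have hd2 : (Y \ insert c₂ X).card = 1 := by
    rw [Finset.card_sdiff_of_subset hsub2, hcY, hc2c]; omega
  have hdX1 : ((insert c₁ X) \ X).card = 1 := by
    rw [Finset.card_sdiff_of_subset (Finset.subset_insert _ _), hc1c]; omega
  have hdX2 : ((insert c₂ X) \ X).card = 1 := by
    rw [Finset.card_sdiff_of_subset (Finset.subset_insert _ _), hc2c]; omega
  have hdXY : (Y \ X).card = 2 := by
    rw [Finset.card_sdiff_of_subset hXY, hcY]; omega
  have key : ∀ A C : Finset (Fin n), A ∈ K → C ∉ K → A ⊆ C → (C \ A).card = 1 →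
      X ⊆ A → C ⊆ Y →
      (A = insert c₁ X ∧ C = Y) ∨ (A = insert c₂ X ∧ C = Y) ∨
      (A = X ∧ C = insert c₁ X) ∨ (A = X ∧ C = insert c₂ X) := by
    intro A C hA hC hAC hcard hXA hCY
    have hAY : A ⊆ Y := hAC.trans hCY
    rw [hYeq] at hAY hCY
    rcases between_aux hXA hAY with rfl | rfl | rfl | rfl <;>
      rcases between_aux (hXA.trans hAC) hCY with rfl | rfl | rfl | rfl <;>
      rw [← hYeq] at * <;> simp_all
  refine ⟨?_, ?_, ?_⟩
  · intro h1 h2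
    ext ⟨A, C⟩
    simp only [facetsContaining, Set.mem_setOf_eq, Set.mem_insert_iff,
      Set.mem_singleton_iff, Prod.mk.injEq]
    constructor
    · rintro ⟨hA, hC, hAC, hcard, hXA, hCY⟩
      rcases key A C hA hC hAC hcard hXA hCY with ⟨rfl, rfl⟩ | ⟨rfl, rfl⟩ | ⟨rfl, rfl⟩ | ⟨rfl, rfl⟩ <;>
        simp_all
    · rintro (⟨rfl, rfl⟩ | ⟨rfl, rfl⟩)
      · exact ⟨h1, hY, hsub1, hd1, Finset.subset_insert _ _, subset_rfl⟩
      · exact ⟨h2, hY, hsub2, hd2, Finset.subset_insert _ _, subset_rfl⟩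
  · intro h1 h2
    ext ⟨A, C⟩
    simp only [facetsContaining, Set.mem_setOf_eq, Set.mem_insert_iff,
      Set.mem_singleton_iff, Prod.mk.injEq]
    constructor
    · rintro ⟨hA, hC, hAC, hcard, hXA, hCY⟩
      rcases key A C hA hC hAC hcard hXA hCY with ⟨rfl, rfl⟩ | ⟨rfl, rfl⟩ | ⟨rfl, rfl⟩ | ⟨rfl, rfl⟩ <;>
        simp_all
    · rintro (⟨rfl, rfl⟩ | ⟨rfl, rfl⟩)
      · exact ⟨hX, h1, Finset.subset_insert _ _, hdX1, subset_rfl, hsub1⟩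
      · exact ⟨hX, h2, Finset.subset_insert _ _, hdX2, subset_rfl, hsub2⟩
  · intro h1 h2
    ext ⟨A, C⟩
    simp only [facetsContaining, Set.mem_setOf_eq, Set.mem_insert_iff,
      Set.mem_singleton_iff, Prod.mk.injEq]
    constructor
    · rintro ⟨hA, hC, hAC, hcard, hXA, hCY⟩
      rcases key A C hA hC hAC hcard hXA hCY with ⟨rfl, rfl⟩ | ⟨rfl, rfl⟩ | ⟨rfl, rfl⟩ | ⟨rfl, rfl⟩ <;>
        simp_all
    · rintro (⟨rfl, rfl⟩ | ⟨rfl, rfl⟩)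
      · exact ⟨h1, hY, hsub1, hd1, Finset.subset_insert _ _, subset_rfl⟩
      · exact ⟨hX, h2, Finset.subset_insert _ _, hdX2, subset_rfl, hsub2⟩
end
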